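/- arXiv:1802.06335 — 2 statements merged into one kernel-verified Lean document; each statement's English description precedes it below -/
import Mathlib

section
/- Let $s \in S$ and suppose $v,w \in W$ have a join $v \vee w$ under the Bruhat order. Then $\psi_s(v)$ and $\psi_s(w)$ have a join under the Bruhat order, and it equals $\psi_s(v \vee w)$. -/
namespace PaperStmt

open scoped Classical

variable {B : Type*} {W : Type*} [Group W] {M : CoxeterMatrix B}

/-- Bruhat (strong) cover: `v = t * u` for a reflection `t`, with `ℓ v = ℓ u + 1`. -/
def BruhatCov (cs : CoxeterSystem M W) (u v : W) : Prop :=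
  cs.length v = cs.length u + 1 ∧ ∃ t : W, cs.IsReflection t ∧ v = t * u

/-- The Bruhat (strong) order, generated by the covering relations. -/
def BruhatLe (cs : CoxeterSystem M W) : W → W → Prop :=
  Relation.ReflTransGen (BruhatCov cs)

/-- Strict Bruhat order. -/
def BruhatLt (cs : CoxeterSystem M W) (u v : W) : Prop :=
  BruhatLe cs u v ∧ u ≠ v

/-- Left weak order: `u ≤_L v` iff `ℓ(v u⁻¹) + ℓ u = ℓ v`. -/
def leftLe (cs : CoxeterSystem M W) (u v : W) : Prop :=
  cs.length (v * u⁻¹) + cs.length u = cs.length v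

/-- Right weak order: `u ≤_R v` iff `ℓ u + ℓ(u⁻¹ v) = ℓ v`. -/
def rightLe (cs : CoxeterSystem M W) (u v : W) : Prop :=
  cs.length u + cs.length (u⁻¹ * v) = cs.length v

/-- Demazure action of a simple reflection: `φ_s(x) = s x` if `s x > x`, else `x`. -/
noncomputable def phi (cs : CoxeterSystem M W) (i : B) (x : W) : W :=
  if BruhatLt cs x (cs.simple i * x) then cs.simple i * x else x

/-- Anti-Demazure action: `ψ_s(x) = s x` if `s x < x`, else `x`. -/
noncomputable def psi (cs : CoxeterSystem M W) (i : B) (x : W) : W :=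
  if BruhatLt cs (cs.simple i * x) x then cs.simple i * x else x

/-- Right anti-Demazure action: `ψ^R_s(x) = x s` if `x s < x`, else `x`. -/
noncomputable def psiR (cs : CoxeterSystem M W) (i : B) (x : W) : W :=
  if BruhatLt cs (x * cs.simple i) x then x * cs.simple i else x

/-- `φ_w` along a word `w = s_1 ⋯ s_n`: `φ_{s_1} ∘ ⋯ ∘ φ_{s_n}`. -/
noncomputable def phiWord (cs : CoxeterSystem M W) (ω : List B) (x : W) : W :=
  ω.foldr (phi cs) x

/-- `ψ_w` along a word `w = s_1 ⋯ s_n`: `ψ_{s_1} ∘ ⋯ ∘ ψ_{s_n}`. -/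
noncomputable def psiWord (cs : CoxeterSystem M W) (ω : List B) (x : W) : W :=
  ω.foldr (psi cs) x

/-- `ψ^R_w` along a word `w = s_1 ⋯ s_n`: `ψ^R_{s_n} ∘ ⋯ ∘ ψ^R_{s_1}`. -/
noncomputable def psiRWord (cs : CoxeterSystem M W) (ω : List B) (x : W) : W :=
  ω.foldl (fun y i => psiR cs i y) x

set_option linter.unusedSectionVars false
set_option linter.unusedVariables false

open CoxeterSystem List




open CoxeterSystem List

noncomputable def mu (cs : CoxeterSystem M W) (i : B) : Function.End (W × ZMod 2) :=
  fun x => (cs.simple i * x.1 * cs.simple i, x.2 + if x.1 = cs.simple i then 1 else 0)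

lemma end_mul_apply (f g : Function.End (W × ZMod 2)) (x : W × ZMod 2) :
    (f * g) x = f (g x) := rfl

lemma zmod2_add_self (a : ZMod 2) : a + a = 0 := by
  have h2 : (2 : ZMod 2) = 0 := rfl
  calc a + a = 2 * a := (two_mul a).symm
  _ = 0 := by rw [h2, zero_mul]

lemma conj_pow_simple (cs : CoxeterSystem M W) (i j : B) (m : ℕ) :
    ((cs.simple i * cs.simple j) ^ m)⁻¹ =
      cs.simple j * (cs.simple i * cs.simple j) ^ m * cs.simple j := by
  have h1 : cs.simple j * (cs.simple i * cs.simple j) * (cs.simple j)⁻¹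
      = (cs.simple i * cs.simple j)⁻¹ := by
    rw [cs.inv_simple, mul_inv_rev, cs.inv_simple]
    simp [mul_assoc, cs.simple_mul_simple_cancel_left, cs.simple_mul_simple_self]
  have := map_pow (MulAut.conj (cs.simple j)) (cs.simple i * cs.simple j) m
  simp only [MulAut.conj_apply] at this
  rw [h1, inv_pow] at this
  rw [← this, cs.inv_simple]

lemma mu_pow_apply (cs : CoxeterSystem M W) (i j : B) (k : ℕ) (x : W × ZMod 2) :
    ((mu cs i * mu cs j) ^ k) x =
      ((cs.simple i * cs.simple j) ^ k * x.1 * ((cs.simple i * cs.simple j) ^ k)⁻¹,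
        x.2 + ∑ r ∈ Finset.range (2 * k),
          (if x.1 = cs.simple j * (cs.simple i * cs.simple j) ^ r then 1 else 0 : ZMod 2)) := by
  induction k with
  | zero =>
      show x = _
      simp
  | succ n ih =>
      have happ : ((mu cs i * mu cs j) ^ (n+1)) x
          = (mu cs i) ((mu cs j) (((mu cs i * mu cs j) ^ n) x)) := by
        rw [pow_succ', end_mul_apply, end_mul_apply]
      rw [happ, ih]
      set c := cs.simple i * cs.simple j with hc
      have hinv : ∀ m : ℕ, (c ^ m)⁻¹ = cs.simple j * c ^ m * cs.simple j :=
        conj_pow_simple cs i j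
      have key1 : (c^n)⁻¹ * cs.simple j * c^n = cs.simple j * c^(2*n) := by
        rw [hinv n, two_mul, pow_add]
        simp only [mul_assoc, cs.simple_mul_simple_cancel_left]
      have key2 : (c^n)⁻¹ * (cs.simple j * cs.simple i * cs.simple j) * c^n
          = cs.simple j * c^(2*n+1) := by
        rw [hinv n, show 2*n+1 = n + (n+1) by omega, pow_add, pow_succ', hc]
        simp only [mul_assoc, cs.simple_mul_simple_cancel_left]
      have hcond1 : (c ^ n * x.1 * (c ^ n)⁻¹ = cs.simple j) ↔ (x.1 = cs.simple j * c ^ (2*n)) := by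
        constructor
        · intro h
          have e1 : x.1 = (c^n)⁻¹ * (c ^ n * x.1 * (c ^ n)⁻¹) * c^n := by group
          rw [h] at e1
          rw [e1]
          exact key1
        · intro h
          rw [h, ← key1]
          group
      have hcond2 : (cs.simple j * (c ^ n * x.1 * (c ^ n)⁻¹) * cs.simple j = cs.simple i)
          ↔ (x.1 = cs.simple j * c ^ (2*n+1)) := by
        constructor
        · intro h
          have e1 : x.1 = (c^n)⁻¹ * (cs.simple j *
              (cs.simple j * (c ^ n * x.1 * (c ^ n)⁻¹) * cs.simple j) * cs.simple j) * c^n := by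
            simp only [mul_assoc, cs.simple_mul_simple_cancel_left]
            group
          rw [h] at e1
          rw [e1, ← key2]
        · intro h
          rw [← key2] at h
          rw [h]
          simp only [mul_assoc, cs.simple_mul_simple_cancel_left]
          simp [cs.simple_mul_simple_self, ← mul_assoc]
      simp only [mu]
      refine Prod.ext ?_ ?_
      · show cs.simple i * (cs.simple j * (c ^ n * x.1 * (c ^ n)⁻¹) * cs.simple j) * cs.simple i
            = c ^ (n+1) * x.1 * (c ^ (n+1))⁻¹
        rw [show cs.simple i * (cs.simple j * (c ^ n * x.1 * (c ^ n)⁻¹) * cs.simple j) * cs.simple i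
            = c * (c ^ n * x.1 * (c ^ n)⁻¹) * c⁻¹ by
          rw [hc, mul_inv_rev, cs.inv_simple, cs.inv_simple]; group]
        group
      · show (x.2 + ∑ r ∈ Finset.range (2 * n),
            (if x.1 = cs.simple j * c ^ r then 1 else 0 : ZMod 2))
            + (if c ^ n * x.1 * (c ^ n)⁻¹ = cs.simple j then 1 else 0)
            + (if cs.simple j * (c ^ n * x.1 * (c ^ n)⁻¹) * cs.simple j = cs.simple i then 1 else 0)
            = x.2 + ∑ r ∈ Finset.range (2 * (n+1)),
              (if x.1 = cs.simple j * c ^ r then 1 else 0 : ZMod 2)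
        simp only [hcond1, hcond2]
        rw [show 2*(n+1) = (2*n)+1+1 by omega, Finset.sum_range_succ, Finset.sum_range_succ]
        ring

theorem mu_liftable (cs : CoxeterSystem M W) : M.IsLiftable (mu cs) := by
  intro i j
  funext x
  rw [mu_pow_apply]
  have h1 : (cs.simple i * cs.simple j) ^ M i j = 1 := cs.simple_mul_simple_pow i j
  rw [h1]
  have h2 : ∑ r ∈ Finset.range (2 * M i j),
      (if x.1 = cs.simple j * (cs.simple i * cs.simple j) ^ r then 1 else 0 : ZMod 2) = 0 := by
    rw [two_mul, Finset.sum_range_add]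
    have : ∀ r : ℕ, (cs.simple i * cs.simple j) ^ (M i j + r)
        = (cs.simple i * cs.simple j) ^ r := by
      intro r
      rw [pow_add, h1, one_mul]
    simp only [this]
    exact zmod2_add_self _
  rw [h2]
  show _ = x
  simp


open CoxeterSystem List


/-- The parity representation `W →* Function.End (W × ZMod 2)`. -/
noncomputable def theta (cs : CoxeterSystem M W) : W →* Function.End (W × ZMod 2) :=
  cs.lift ⟨mu cs, mu_liftable cs⟩

lemma theta_simple (cs : CoxeterSystem M W) (i : B) : theta cs (cs.simple i) = mu cs i :=
  cs.lift_apply_simple (mu_liftable cs) i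

/-- Count (mod 2) of occurrences of an element in a list. -/
noncomputable def cnt : List W → W → ZMod 2
  | [], _ => 0
  | a :: l, y => (if y = a then 1 else 0) + cnt l y

lemma cnt_eq_zero_of_not_mem {l : List W} {y : W} (h : y ∉ l) : cnt l y = 0 := by
  induction l with
  | nil => rfl
  | cons a l ih =>
      rw [cnt, if_neg (show y ≠ a from fun hy => h (by rw [hy]; exact mem_cons_self)),
        zero_add]
      exact ih (fun hy => h (mem_cons_of_mem a hy))

lemma theta_wordProd (cs : CoxeterSystem M W) (ω : List B) (x : W × ZMod 2) :
    theta cs (cs.wordProd ω) x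
      = (cs.wordProd ω * x.1 * (cs.wordProd ω)⁻¹, x.2 + cnt (cs.rightInvSeq ω) x.1) := by
  induction ω with
  | nil =>
      rw [cs.wordProd_nil, map_one]
      show x = _
      simp [rightInvSeq, cnt]
  | cons i ω ih =>
      rw [cs.wordProd_cons, map_mul, end_mul_apply, ih, theta_simple]
      show (cs.simple i * (cs.wordProd ω * x.1 * (cs.wordProd ω)⁻¹) * cs.simple i, _) = _
      refine Prod.ext ?_ ?_
      · show cs.simple i * (cs.wordProd ω * x.1 * (cs.wordProd ω)⁻¹) * cs.simple i
          = cs.wordProd (i :: ω) * x.1 * (cs.wordProd (i :: ω))⁻¹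
        rw [cs.wordProd_cons, mul_inv_rev, cs.inv_simple]
        group
      · show (x.2 + cnt (cs.rightInvSeq ω) x.1)
            + (if cs.wordProd ω * x.1 * (cs.wordProd ω)⁻¹ = cs.simple i then 1 else 0)
          = x.2 + cnt (cs.rightInvSeq (i :: ω)) x.1
        have hcond : (cs.wordProd ω * x.1 * (cs.wordProd ω)⁻¹ = cs.simple i)
            ↔ (x.1 = (cs.wordProd ω)⁻¹ * cs.simple i * cs.wordProd ω) := by
          constructor
          · intro h
            rw [← h]; group
          · intro h
            rw [h]; group
        show _ = x.2 + cnt ((cs.wordProd ω)⁻¹ * cs.simple i * cs.wordProd ω :: cs.rightInvSeq ω) x.1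
        rw [cnt]
        simp only [hcond]
        ring

/-- `cntw cs w y` : the parity of the number of times `y` occurs in the right inversion
sequence of any word for `w`. -/
noncomputable def cntw (cs : CoxeterSystem M W) (w y : W) : ZMod 2 :=
  (theta cs w (y, 0)).2

lemma cntw_eq_cnt (cs : CoxeterSystem M W) (ω : List B) (y : W) :
    cntw cs (cs.wordProd ω) y = cnt (cs.rightInvSeq ω) y := by
  rw [cntw, theta_wordProd]
  exact zero_add _

lemma theta_apply (cs : CoxeterSystem M W) (w : W) (x : W × ZMod 2) :
    theta cs w x = (w * x.1 * w⁻¹, x.2 + cntw cs w x.1) := by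
  obtain ⟨ω, rfl⟩ := cs.wordProd_surjective w
  rw [theta_wordProd, cntw_eq_cnt]

lemma cntw_one (cs : CoxeterSystem M W) (y : W) : cntw cs 1 y = 0 := by
  rw [cntw, map_one]
  rfl

lemma cntw_mul (cs : CoxeterSystem M W) (u v y : W) :
    cntw cs (u * v) y = cntw cs v y + cntw cs u (v * y * v⁻¹) := by
  have h1 : theta cs (u * v) (y, 0) = theta cs u (theta cs v (y, 0)) := by
    rw [map_mul, end_mul_apply]
  rw [cntw, h1, theta_apply cs v, theta_apply cs u]
  simp [add_comm]

lemma cntw_simple_self (cs : CoxeterSystem M W) (i : B) : cntw cs (cs.simple i) (cs.simple i) = 1 := by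
  rw [cntw, theta_simple]
  show (0 : ZMod 2) + (if cs.simple i = cs.simple i then 1 else 0) = 1
  rw [if_pos rfl, zero_add]

lemma cntw_reflection_self (cs : CoxeterSystem M W) {t : W} (ht : cs.IsReflection t) :
    cntw cs t t = 1 := by
  obtain ⟨v, i, rfl⟩ := ht
  have e1 : v * cs.simple i * v⁻¹ = v * (cs.simple i * v⁻¹) := by group
  rw [e1, cntw_mul]
  have e2 : cs.simple i * v⁻¹ * (v * (cs.simple i * v⁻¹)) * (cs.simple i * v⁻¹)⁻¹
      = cs.simple i := by group
  rw [e2, cntw_mul cs (cs.simple i) v⁻¹]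
  have e3 : v⁻¹ * (v * (cs.simple i * v⁻¹)) * v⁻¹⁻¹ = cs.simple i := by group
  rw [e3, cntw_simple_self]
  have e4 : cntw cs v⁻¹ (v * (cs.simple i * v⁻¹)) + cntw cs v (cs.simple i) = 0 := by
    have h := cntw_mul cs v⁻¹ v (cs.simple i)
    rw [inv_mul_cancel, cntw_one, mul_assoc] at h
    rw [add_comm]
    exact h.symm
  calc cntw cs v⁻¹ (v * (cs.simple i * v⁻¹)) + 1 + cntw cs v (cs.simple i)
      = cntw cs v⁻¹ (v * (cs.simple i * v⁻¹)) + cntw cs v (cs.simple i) + 1 := by ring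
  _ = 1 := by rw [e4, zero_add]

/-- If `t` is a right inversion of `w`, then `t` occurs in the right inversion sequence
of any reduced word for `w`. -/
lemma mem_rightInvSeq_of_isRightInversion (cs : CoxeterSystem M W) {w t : W}
    (ht : cs.IsRightInversion w t) {ω : List B} (hω : cs.IsReduced ω) (hπ : w = cs.wordProd ω) :
    t ∈ cs.rightInvSeq ω := by
  obtain ⟨htr, hlen⟩ := ht
  have hwt : cntw cs (w * t) t = 0 := by
    obtain ⟨ρ, hρred, hρ⟩ := cs.exists_reduced_word' (w * t)
    rw [hρ, cntw_eq_cnt]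
    apply cnt_eq_zero_of_not_mem
    intro hmem
    have := (cs.isRightInversion_of_mem_rightInvSeq hρred hmem).2
    rw [← hρ, mul_assoc, htr.mul_self, mul_one] at this
    omega
  have h1 : cntw cs w t = 1 := by
    have e1 : w = (w * t) * t := by rw [mul_assoc, htr.mul_self, mul_one]
    have e2 : t * t * t⁻¹ = t := by rw [htr.mul_self, one_mul, htr.inv]
    rw [e1, cntw_mul, e2, cntw_reflection_self cs htr, hwt, add_zero]
  rw [hπ, cntw_eq_cnt] at h1
  by_contra hmem
  rw [cnt_eq_zero_of_not_mem hmem] at h1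
  exact one_ne_zero h1.symm

/-- Right-handed strong exchange property. -/
lemma strong_exchange_right (cs : CoxeterSystem M W) {w t : W}
    (ht : cs.IsRightInversion w t) {ω : List B} (hω : cs.IsReduced ω) (hπ : w = cs.wordProd ω) :
    ∃ j < ω.length, w * t = cs.wordProd (ω.eraseIdx j) := by
  have hmem := mem_rightInvSeq_of_isRightInversion cs ht hω hπ
  obtain ⟨j, hj, hjt⟩ := List.mem_iff_getElem.mp hmem
  rw [cs.length_rightInvSeq] at hj
  refine ⟨j, hj, ?_⟩
  rw [hπ, ← cs.wordProd_mul_getD_rightInvSeq ω j]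
  congr 1
  rw [List.getD_eq_getElem _ 1 (by rw [cs.length_rightInvSeq]; exact hj)]
  exact hjt.symm

/-- Left-handed strong exchange property. -/
lemma strong_exchange_left (cs : CoxeterSystem M W) {w t : W}
    (ht : cs.IsLeftInversion w t) {ω : List B} (hω : cs.IsReduced ω) (hπ : w = cs.wordProd ω) :
    ∃ j, t * w = cs.wordProd (ω.eraseIdx j) := by
  have hrinv : cs.IsRightInversion w⁻¹ t := cs.isRightInversion_inv_iff.mpr ht
  have hrev : cs.IsReduced ω.reverse := (cs.isReduced_reverse_iff ω).mpr hω
  have hπrev : w⁻¹ = cs.wordProd ω.reverse := by rw [cs.wordProd_reverse, hπ]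
  have hmem : t ∈ cs.rightInvSeq ω.reverse :=
    mem_rightInvSeq_of_isRightInversion cs hrinv hrev hπrev
  rw [cs.rightInvSeq_reverse, List.mem_reverse] at hmem
  obtain ⟨j, hj, hjt⟩ := List.mem_iff_getElem.mp hmem
  rw [cs.length_leftInvSeq] at hj
  refine ⟨j, ?_⟩
  rw [hπ, ← cs.getD_leftInvSeq_mul_wordProd ω j]
  congr 1
  rw [List.getD_eq_getElem _ 1 (by rw [cs.length_leftInvSeq]; exact hj)]
  exact hjt.symm


open CoxeterSystem List


lemma BruhatLe.length_le {cs : CoxeterSystem M W} {u v : W} (h : BruhatLe cs u v) :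
    cs.length u ≤ cs.length v := by
  induction h with
  | refl => exact le_refl _
  | tail _ hcov ih => have := hcov.1; omega

lemma BruhatLt.length_lt {cs : CoxeterSystem M W} {u v : W} (h : BruhatLt cs u v) :
    cs.length u < cs.length v := by
  obtain ⟨hle, hne⟩ := h
  cases hle with
  | refl => exact absurd rfl hne
  | tail hub hcov => have h1 := BruhatLe.length_le hub; have h2 := hcov.1; omega

lemma bruhatLe_of_simple_mul_lt {cs : CoxeterSystem M W} {x : W} {i : B}
    (h : cs.length (cs.simple i * x) < cs.length x) :
    BruhatLe cs (cs.simple i * x) x := by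
  rcases cs.length_simple_mul x i with d | d
  · omega
  · exact Relation.ReflTransGen.single
      ⟨by omega, cs.simple i, cs.isReflection_simple i,
        (cs.simple_mul_simple_cancel_left i).symm⟩

lemma bruhatLt_simple_mul_iff {cs : CoxeterSystem M W} {x : W} {i : B} :
    BruhatLt cs (cs.simple i * x) x ↔ cs.length (cs.simple i * x) < cs.length x := by
  constructor
  · exact fun h => h.length_lt
  · intro h
    exact ⟨bruhatLe_of_simple_mul_lt h, fun he => by rw [he] at h; omega⟩

lemma bruhatLt_simple_mul_iff' {cs : CoxeterSystem M W} {x : W} {i : B} :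
    BruhatLt cs x (cs.simple i * x) ↔ cs.length x < cs.length (cs.simple i * x) := by
  constructor
  · exact fun h => h.length_lt
  · intro h
    rcases cs.length_simple_mul x i with d | d
    · exact ⟨Relation.ReflTransGen.single
        ⟨by omega, cs.simple i, cs.isReflection_simple i, rfl⟩,
        fun he => by rw [← he] at h; omega⟩
    · omega

lemma psi_eq_pos {cs : CoxeterSystem M W} {x : W} {i : B}
    (h : cs.length (cs.simple i * x) < cs.length x) : psi cs i x = cs.simple i * x := by
  rw [psi, if_pos (bruhatLt_simple_mul_iff.mpr h)]

lemma psi_eq_neg {cs : CoxeterSystem M W} {x : W} {i : B}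
    (h : ¬ cs.length (cs.simple i * x) < cs.length x) : psi cs i x = x := by
  rw [psi, if_neg (fun hlt => h (bruhatLt_simple_mul_iff.mp hlt))]

lemma phi_eq_pos {cs : CoxeterSystem M W} {x : W} {i : B}
    (h : cs.length x < cs.length (cs.simple i * x)) : phi cs i x = cs.simple i * x := by
  rw [phi, if_pos (bruhatLt_simple_mul_iff'.mpr h)]

lemma phi_eq_neg {cs : CoxeterSystem M W} {x : W} {i : B}
    (h : ¬ cs.length x < cs.length (cs.simple i * x)) : phi cs i x = x := by
  rw [phi, if_neg (fun hlt => h (bruhatLt_simple_mul_iff'.mp hlt))]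

/-- The key lemma, proved using the strong exchange property: if `u ⋖ t * u` is a Bruhat
cover, `s i * u > u` and `s i * (t * u) < t * u`, then `s i * u = t * u`. -/
lemma key_lemma (cs : CoxeterSystem M W) (i : B) {t u : W} (ht : cs.IsReflection t)
    (hcov : cs.length (t * u) = cs.length u + 1)
    (hdu : cs.length (cs.simple i * u) = cs.length u + 1)
    (hdw : cs.length (cs.simple i * (t * u)) + 1 = cs.length (t * u)) :
    cs.simple i * u = t * u := by
  set w := t * u with hw
  obtain ⟨ρ, hρred, hρ⟩ := cs.exists_reduced_word' (cs.simple i * w)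
  have hρlen : ρ.length = cs.length u := by
    rw [← hρred, ← hρ]; omega
  have hπω : w = cs.wordProd (i :: ρ) := by
    rw [cs.wordProd_cons, ← hρ, cs.simple_mul_simple_cancel_left]
  have hωred : cs.IsReduced (i :: ρ) := by
    rw [CoxeterSystem.IsReduced, ← hπω, List.length_cons]
    omega
  have hinv : cs.IsLeftInversion w t := by
    refine ⟨ht, ?_⟩
    have : t * w = u := by rw [hw, ← mul_assoc, ht.mul_self, one_mul]
    rw [this]; omega
  obtain ⟨j, hj⟩ := strong_exchange_left cs hinv hωred hπω
  have htwu : t * w = u := by rw [hw, ← mul_assoc, ht.mul_self, one_mul]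
  rw [htwu] at hj
  match j with
  | 0 =>
      rw [List.eraseIdx_cons_zero, ← hρ] at hj
      rw [hj, cs.simple_mul_simple_cancel_left]
  | (k+1) =>
      exfalso
      rw [List.eraseIdx_cons_succ, cs.wordProd_cons] at hj
      have h1 : cs.simple i * u = cs.wordProd (ρ.eraseIdx k) := by
        rw [hj, cs.simple_mul_simple_cancel_left]
      have h2 := cs.length_wordProd_le (ρ.eraseIdx k)
      rw [← h1] at h2
      have h3 : (ρ.eraseIdx k).length ≤ ρ.length := (List.eraseIdx_sublist ρ k).length_le
      omega

lemma psi_cover {cs : CoxeterSystem M W} {u w : W} {i : B} (hcov : BruhatCov cs u w) :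
    BruhatLe cs (psi cs i u) (psi cs i w) := by
  obtain ⟨hl, t, ht, rfl⟩ := hcov
  rcases cs.length_simple_mul u i with du | du <;>
    rcases cs.length_simple_mul (t * u) i with dw | dw
  · -- s i * u > u, s i * (t * u) > t * u
    rw [psi_eq_neg (by omega), psi_eq_neg (by omega)]
    exact Relation.ReflTransGen.single ⟨hl, t, ht, rfl⟩
  · -- s i * u > u, s i * (t * u) < t * u : key lemma
    have hk := key_lemma cs i ht hl du dw
    rw [psi_eq_neg (by omega), psi_eq_pos (by omega), ← hk,
      cs.simple_mul_simple_cancel_left]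
    exact Relation.ReflTransGen.refl
  · -- s i * u < u, s i * (t * u) > t * u
    rw [psi_eq_pos (by omega), psi_eq_neg (by omega)]
    refine Relation.ReflTransGen.tail (Relation.ReflTransGen.single ?_) ⟨hl, t, ht, rfl⟩
    exact ⟨by omega, cs.simple i, cs.isReflection_simple i,
      (cs.simple_mul_simple_cancel_left i).symm⟩
  · -- both descents
    rw [psi_eq_pos (by omega), psi_eq_pos (by omega)]
    refine Relation.ReflTransGen.single ⟨by omega, cs.simple i * t * cs.simple i, ?_, ?_⟩
    · have := ht.conj (cs.simple i)
      rwa [cs.inv_simple] at this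
    · simp [mul_assoc, cs.simple_mul_simple_cancel_left]

lemma phi_cover {cs : CoxeterSystem M W} {u w : W} {i : B} (hcov : BruhatCov cs u w) :
    BruhatLe cs (phi cs i u) (phi cs i w) := by
  obtain ⟨hl, t, ht, rfl⟩ := hcov
  rcases cs.length_simple_mul u i with du | du <;>
    rcases cs.length_simple_mul (t * u) i with dw | dw
  · -- both ascents
    rw [phi_eq_pos (by omega), phi_eq_pos (by omega)]
    refine Relation.ReflTransGen.single ⟨by omega, cs.simple i * t * cs.simple i, ?_, ?_⟩
    · have := ht.conj (cs.simple i)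
      rwa [cs.inv_simple] at this
    · simp [mul_assoc, cs.simple_mul_simple_cancel_left]
  · -- s i * u > u, s i * (t * u) < t * u : key lemma
    have hk := key_lemma cs i ht hl du dw
    rw [phi_eq_pos (by omega), phi_eq_neg (by omega), hk]
    exact Relation.ReflTransGen.refl
  · -- s i * u < u, s i * (t * u) > t * u
    rw [phi_eq_neg (by omega), phi_eq_pos (by omega)]
    exact Relation.ReflTransGen.tail (Relation.ReflTransGen.single ⟨hl, t, ht, rfl⟩)
      ⟨by omega, cs.simple i, cs.isReflection_simple i, rfl⟩
  · rw [phi_eq_neg (by omega), phi_eq_neg (by omega)]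
    exact Relation.ReflTransGen.single ⟨hl, t, ht, rfl⟩

lemma psi_mono {cs : CoxeterSystem M W} {u v : W} {i : B} (h : BruhatLe cs u v) :
    BruhatLe cs (psi cs i u) (psi cs i v) := by
  induction h with
  | refl => exact Relation.ReflTransGen.refl
  | tail _ hcov ih => exact Relation.ReflTransGen.trans ih (psi_cover hcov)

lemma phi_mono {cs : CoxeterSystem M W} {u v : W} {i : B} (h : BruhatLe cs u v) :
    BruhatLe cs (phi cs i u) (phi cs i v) := by
  induction h with
  | refl => exact Relation.ReflTransGen.refl
  | tail _ hcov ih => exact Relation.ReflTransGen.trans ih (phi_cover hcov)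

lemma le_phi_psi (cs : CoxeterSystem M W) (i : B) (x : W) :
    BruhatLe cs x (phi cs i (psi cs i x)) := by
  by_cases h : cs.length (cs.simple i * x) < cs.length x
  · rw [psi_eq_pos h, phi_eq_pos (by rw [cs.simple_mul_simple_cancel_left]; exact h),
      cs.simple_mul_simple_cancel_left]
    exact Relation.ReflTransGen.refl
  · rw [psi_eq_neg h]
    rcases cs.length_simple_mul x i with d | d
    · rw [phi_eq_pos (by omega)]
      exact Relation.ReflTransGen.single ⟨by omega, cs.simple i, cs.isReflection_simple i, rfl⟩
    · omega

lemma psi_phi_le (cs : CoxeterSystem M W) (i : B) (x : W) :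
    BruhatLe cs (psi cs i (phi cs i x)) x := by
  by_cases h : cs.length x < cs.length (cs.simple i * x)
  · rw [phi_eq_pos h, psi_eq_pos (by rw [cs.simple_mul_simple_cancel_left]; exact h),
      cs.simple_mul_simple_cancel_left]
    exact Relation.ReflTransGen.refl
  · rw [phi_eq_neg h]
    rcases cs.length_simple_mul x i with d | d
    · omega
    · rw [psi_eq_pos (by omega)]
      exact Relation.ReflTransGen.single ⟨by omega, cs.simple i, cs.isReflection_simple i,
        (cs.simple_mul_simple_cancel_left i).symm⟩


theorem stmt8 (cs : CoxeterSystem M W) (i : B) (v w j : W)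
    (h₁ : BruhatLe cs v j) (h₂ : BruhatLe cs w j)
    (hmin : ∀ z, BruhatLe cs v z → BruhatLe cs w z → BruhatLe cs j z) :
    BruhatLe cs (psi cs i v) (psi cs i j) ∧ BruhatLe cs (psi cs i w) (psi cs i j) ∧
      ∀ z, BruhatLe cs (psi cs i v) z → BruhatLe cs (psi cs i w) z →
        BruhatLe cs (psi cs i j) z := by
  refine ⟨psi_mono h₁, psi_mono h₂, ?_⟩
  intro z hv hw
  have hvz : BruhatLe cs v (phi cs i z) :=
    Relation.ReflTransGen.trans (le_phi_psi cs i v) (phi_mono hv)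
  have hwz : BruhatLe cs w (phi cs i z) :=
    Relation.ReflTransGen.trans (le_phi_psi cs i w) (phi_mono hw)
  have hjz : BruhatLe cs j (phi cs i z) := hmin _ hvz hwz
  exact Relation.ReflTransGen.trans (psi_mono hjz) (psi_phi_le cs i z)

end PaperStmt
end

section
/- For any element $z$ of a Coxeter group, the map $\Phi_z : x \mapsto zx^{-1}$ is a bijection from the lower left-weak-order interval $[e,z]_L$ to the lower right-weak-order interval $[e,z]_R$, and it is an anti-isomorphism with respect to the Bruhat order: for $x,x' \le_L z$, $x \le x'$ iff $\Phi_z(x) \ge \Phi_z(x')$. -/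
namespace PaperStmt

open scoped Classical

variable {B : Type*} {W : Type*} [Group W] {M : CoxeterMatrix B}

section ListAux

theorem eraseIdx_append_lt {α : Type*} (l₁ l₂ : List α) (j : ℕ) (h : j < l₁.length) :
    (l₁ ++ l₂).eraseIdx j = l₁.eraseIdx j ++ l₂ := by
  induction l₁ generalizing j with
  | nil => simp at h
  | cons a l ih =>
    cases j with
    | zero => simp [List.eraseIdx]
    | succ k =>
      simp only [List.cons_append, List.eraseIdx_cons_succ, List.cons_append]
      rw [ih k (by simpa using h)]

theorem eraseIdx_append_ge {α : Type*} (l₁ l₂ : List α) (j : ℕ) (h : l₁.length ≤ j) :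
    (l₁ ++ l₂).eraseIdx j = l₁ ++ l₂.eraseIdx (j - l₁.length) := by
  induction l₁ generalizing j with
  | nil => simp
  | cons a l ih =>
    cases j with
    | zero => simp at h
    | succ k =>
      simp only [List.cons_append, List.eraseIdx_cons_succ, List.length_cons]
      rw [ih k (by simpa using h)]
      simp [Nat.succ_sub_one]

end ListAux

section Rep

variable (cs : CoxeterSystem M W)

/-- The function underlying the reflection-counting permutation representation. -/
noncomputable def etaFun (i : B) : W × ℤˣ → W × ℤˣ :=
  fun x => (cs.simple i * x.1 * cs.simple i, if x.1 = cs.simple i then -x.2 else x.2)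

lemma simple_conj_cancel (i : B) (w : W) :
    cs.simple i * (cs.simple i * w * cs.simple i) * cs.simple i = w := by
  simp [mul_assoc, cs.simple_mul_simple_cancel_left, cs.simple_mul_simple_self]

lemma simple_conj_eq_iff (i : B) (w : W) :
    cs.simple i * w * cs.simple i = cs.simple i ↔ w = cs.simple i := by
  constructor
  · intro h
    have := simple_conj_cancel cs i w
    rw [h] at this
    rw [← this]
    simp [mul_assoc, cs.simple_mul_simple_self]
  · rintro rfl
    simp [mul_assoc, cs.simple_mul_simple_self]

lemma etaFun_involutive (i : B) : Function.Involutive (etaFun cs i) := by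
  rintro ⟨w, ε⟩
  simp only [etaFun]
  by_cases h : w = cs.simple i
  · simp [h, simple_conj_eq_iff, cs.simple_mul_simple_self, mul_assoc]
  · have h2 : ¬ (cs.simple i * w * cs.simple i = cs.simple i) := by
      rw [simple_conj_eq_iff]; exact h
    simp [h, h2, simple_conj_cancel]

/-- The permutation on `W × ℤˣ` attached to a simple reflection. -/
noncomputable def etaPerm (i : B) : Equiv.Perm (W × ℤˣ) :=
  ⟨etaFun cs i, etaFun cs i, (etaFun_involutive cs i).leftInverse,
    (etaFun_involutive cs i).rightInverse⟩

lemma etaPerm_apply (i : B) (w : W) (ε : ℤˣ) :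
    etaPerm cs i (w, ε) = (cs.simple i * w * cs.simple i, if w = cs.simple i then -ε else ε) :=
  rfl

end Rep

section Braid

variable (cs : CoxeterSystem M W)

lemma units_shuffle (e a b P : ℤˣ) : e * (a * b) * P = e * (P * b * a) := by
  simp [mul_comm, mul_left_comm, mul_assoc]

lemma simple_mul_pow_comm (i j : B) (k : ℕ) :
    cs.simple j * (cs.simple i * cs.simple j) ^ k
      = ((cs.simple i * cs.simple j)⁻¹) ^ k * cs.simple j := by
  induction k with
  | zero => simp
  | succ k ih =>
    rw [pow_succ, ← mul_assoc, ih]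
    have h1 : cs.simple j * (cs.simple i * cs.simple j) =
        (cs.simple i * cs.simple j)⁻¹ * cs.simple j := by
      rw [mul_inv_rev, cs.inv_simple, cs.inv_simple]
      group
    rw [mul_assoc, h1, ← mul_assoc, ← pow_succ]

lemma eta_pow_formula (i j : B) (k : ℕ) (w : W) (ε : ℤˣ) :
    ((etaPerm cs i * etaPerm cs j) ^ k) (w, ε) =
      ((cs.simple i * cs.simple j) ^ k * w * ((cs.simple i * cs.simple j)⁻¹) ^ k,
        ε * ∏ q ∈ Finset.range (2 * k),
          (if w = ((cs.simple i * cs.simple j)⁻¹) ^ q * cs.simple j then (-1 : ℤˣ) else 1)) := by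
  set p := cs.simple i * cs.simple j with hp
  have hsjp : ∀ q : ℕ, cs.simple j * p ^ q = (p⁻¹) ^ q * cs.simple j :=
    simple_mul_pow_comm cs i j
  have hsp : cs.simple j * p = p⁻¹ * cs.simple j := by
    have := hsjp 1; simpa using this
  have E : ∀ q : ℕ, p⁻¹ * ((p⁻¹) ^ q * cs.simple j) * p = (p⁻¹) ^ (q + 1 + 1) * cs.simple j := by
    intro q
    calc p⁻¹ * ((p⁻¹) ^ q * cs.simple j) * p
        = (p⁻¹) ^ (q + 1) * (cs.simple j * p) := by rw [pow_succ' p⁻¹ q]; group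
      _ = (p⁻¹) ^ (q + 1) * (p⁻¹ * cs.simple j) := by rw [hsp]
      _ = (p⁻¹) ^ (q + 1 + 1) * cs.simple j := by rw [pow_succ p⁻¹ (q + 1), mul_assoc]
  induction k generalizing w ε with
  | zero => simp
  | succ k ih =>
    rw [pow_succ, Equiv.Perm.mul_apply]
    have hcond : (cs.simple j * w * cs.simple j = cs.simple i) ↔
        (w = (p⁻¹) ^ 1 * cs.simple j) := by
      rw [pow_one, hp, mul_inv_rev, cs.inv_simple, cs.inv_simple]
      constructor
      · intro h
        have h2 := simple_conj_cancel cs j w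
        rw [h] at h2
        rw [← h2]
      · rintro rfl
        simp [mul_assoc, cs.simple_mul_simple_self]
    have hcond0 : (w = cs.simple j) ↔ (w = (p⁻¹) ^ 0 * cs.simple j) := by simp
    have hstep : (etaPerm cs i * etaPerm cs j) (w, ε) =
        (p * w * p⁻¹, ε * ((if w = (p⁻¹) ^ 0 * cs.simple j then (-1 : ℤˣ) else 1) *
          (if w = (p⁻¹) ^ 1 * cs.simple j then (-1 : ℤˣ) else 1))) := by
      rw [Equiv.Perm.mul_apply, etaPerm_apply, etaPerm_apply]
      have hfst : cs.simple i * (cs.simple j * w * cs.simple j) * cs.simple i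
          = p * w * p⁻¹ := by
        rw [hp, mul_inv_rev, cs.inv_simple, cs.inv_simple]
        group
      rw [Prod.mk.injEq]
      refine ⟨hfst, ?_⟩
      simp only [hcond, hcond0]
      by_cases h0 : w = (p⁻¹) ^ 0 * cs.simple j <;>
        by_cases h1 : w = (p⁻¹) ^ 1 * cs.simple j
      · rw [if_pos h0, if_pos h1, if_pos h1, if_pos h0]; simp
      · rw [if_pos h0, if_neg h1, if_neg h1, if_pos h0]; simp
      · rw [if_neg h0, if_pos h1, if_pos h1, if_neg h0]; simp
      · rw [if_neg h0, if_neg h1, if_neg h1, if_neg h0]; simp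
    rw [hstep, ih]
    have hshift : ∀ q : ℕ, ((p * w * p⁻¹ = (p⁻¹) ^ q * cs.simple j) ↔
        (w = (p⁻¹) ^ (q + 1 + 1) * cs.simple j)) := by
      intro q
      rw [← E q]
      constructor
      · intro h; rw [← h]; group
      · intro h; rw [h]; group
    have hprodshift :
        (∏ q ∈ Finset.range (2 * k),
          (if p * w * p⁻¹ = (p⁻¹) ^ q * cs.simple j then (-1 : ℤˣ) else 1))
        = ∏ q ∈ Finset.range (2 * k),
          (if w = (p⁻¹) ^ (q + 1 + 1) * cs.simple j then (-1 : ℤˣ) else 1) :=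
      Finset.prod_congr rfl (fun q _ => if_congr (hshift q) rfl rfl)
    rw [Prod.mk.injEq]
    constructor
    · rw [pow_succ p k, pow_succ' p⁻¹ k]
      group
    · rw [hprodshift]
      have hexp : 2 * (k + 1) = (2 * k + 1) + 1 := by omega
      rw [hexp, Finset.prod_range_succ', Finset.prod_range_succ']
      simp only [zero_add]
      exact units_shuffle _ _ _ _

lemma eta_liftable : M.IsLiftable (fun i => etaPerm cs i) := by
  intro i j
  set m := M i j with hm
  set p := cs.simple i * cs.simple j with hp
  have hpm : p ^ m = 1 := cs.simple_mul_simple_pow i j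
  apply Equiv.ext
  rintro ⟨w, ε⟩
  rw [eta_pow_formula]
  have h1 : p ^ m * w * (p⁻¹) ^ m = w := by
    rw [inv_pow, hpm]; simp
  have h2 : (∏ q ∈ Finset.range (2 * m),
      (if w = (p⁻¹) ^ q * cs.simple j then (-1 : ℤˣ) else 1)) = 1 := by
    have h2m : 2 * m = m + m := by omega
    rw [h2m, Finset.prod_range_add]
    have hsame : ∀ q : ℕ,
        (if w = (p⁻¹) ^ (m + q) * cs.simple j then (-1 : ℤˣ) else 1)
          = (if w = (p⁻¹) ^ q * cs.simple j then (-1 : ℤˣ) else 1) := by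
      intro q
      have : (p⁻¹ : W) ^ (m + q) = (p⁻¹) ^ q := by
        rw [pow_add, inv_pow, hpm]
        simp
      rw [this]
    rw [Finset.prod_congr rfl (fun q _ => hsame q)]
    exact Int.units_mul_self _
  rw [h1, h2, mul_one]
  rfl

end Braid
section Chi

variable (cs : CoxeterSystem M W)

/-- The permutation representation of the Coxeter group on `W × ℤˣ`. -/
noncomputable def rho : W →* Equiv.Perm (W × ℤˣ) :=
  cs.lift ⟨fun i => etaPerm cs i, eta_liftable cs⟩

lemma rho_simple (i : B) : rho cs (cs.simple i) = etaPerm cs i :=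
  cs.lift_apply_simple (eta_liftable cs) i

/-- The sign cocycle. -/
noncomputable def chi (v w : W) : ℤˣ := ((rho cs v) (w, 1)).2

lemma rho_apply (v w : W) (ε : ℤˣ) :
    rho cs v (w, ε) = (v * w * v⁻¹, ε * chi cs v w) := by
  induction v using cs.simple_induction_left generalizing w ε with
  | one =>
    simp [chi]
  | mul_simple_left v i ih =>
    have hmul : rho cs (cs.simple i * v) = rho cs (cs.simple i) * rho cs v := map_mul _ _ _
    have happ : ∀ (w : W) (ε : ℤˣ), rho cs (cs.simple i * v) (w, ε)
        = (cs.simple i * (v * w * v⁻¹) * cs.simple i,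
            if v * w * v⁻¹ = cs.simple i then -(ε * chi cs v w) else ε * chi cs v w) := by
      intro w ε
      rw [hmul, Equiv.Perm.mul_apply, ih, rho_simple, etaPerm_apply]
    have hchi : chi cs (cs.simple i * v) w
        = if v * w * v⁻¹ = cs.simple i then -(chi cs v w) else chi cs v w := by
      rw [show chi cs (cs.simple i * v) w
          = (((rho cs) (cs.simple i * v)) (w, 1)).2 from rfl, happ w 1]
      by_cases h : v * w * v⁻¹ = cs.simple i <;> simp [h]
    rw [happ w ε, hchi]
    rw [Prod.mk.injEq]
    constructor
    · rw [mul_inv_rev, cs.inv_simple]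
      group
    · by_cases h : v * w * v⁻¹ = cs.simple i <;> simp [h]

lemma chi_mul (a b w : W) : chi cs (a * b) w = chi cs b w * chi cs a (b * w * b⁻¹) := by
  have h1 : rho cs (a * b) (w, 1) = rho cs a (rho cs b (w, 1)) := by
    rw [map_mul, Equiv.Perm.mul_apply]
  rw [rho_apply, rho_apply, rho_apply] at h1
  have h2 := congrArg Prod.snd h1
  simpa using h2

lemma chi_simple (i : B) (w : W) :
    chi cs (cs.simple i) w = if w = cs.simple i then -1 else 1 := by
  unfold chi
  rw [rho_simple, etaPerm_apply]

lemma chi_one (w : W) : chi cs 1 w = 1 := by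
  unfold chi
  simp

lemma chi_inv_conj (q w : W) : chi cs q⁻¹ (q * w * q⁻¹) = (chi cs q w)⁻¹ := by
  have h := chi_mul cs q⁻¹ q w
  rw [inv_mul_cancel, chi_one] at h
  exact eq_inv_of_mul_eq_one_right h.symm

lemma chi_reflection_self {t : W} (ht : cs.IsReflection t) : chi cs t t = -1 := by
  obtain ⟨q, i, rfl⟩ := ht
  have key : (cs.simple i * q⁻¹) * (q * cs.simple i * q⁻¹) * (cs.simple i * q⁻¹)⁻¹
      = cs.simple i := by
    rw [mul_inv_rev]
    simp [mul_assoc, cs.simple_mul_simple_cancel_left]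
  have h1 : chi cs (q * (cs.simple i * q⁻¹)) (q * cs.simple i * q⁻¹)
      = chi cs (cs.simple i * q⁻¹) (q * cs.simple i * q⁻¹) * chi cs q (cs.simple i) := by
    have := chi_mul cs q (cs.simple i * q⁻¹) (q * cs.simple i * q⁻¹)
    rw [key] at this
    exact this
  have h2 : chi cs (cs.simple i * q⁻¹) (q * cs.simple i * q⁻¹)
      = chi cs q⁻¹ (q * cs.simple i * q⁻¹) * (-1) := by
    have := chi_mul cs (cs.simple i) q⁻¹ (q * cs.simple i * q⁻¹)
    have harg : q⁻¹ * (q * cs.simple i * q⁻¹) * (q⁻¹)⁻¹ = cs.simple i := by group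
    rw [harg, chi_simple, if_pos rfl] at this
    exact this
  have h3 : chi cs q⁻¹ (q * cs.simple i * q⁻¹) = (chi cs q (cs.simple i))⁻¹ :=
    chi_inv_conj cs q (cs.simple i)
  have h4 : q * (cs.simple i * q⁻¹) = q * cs.simple i * q⁻¹ := by rw [mul_assoc]
  rw [h4] at h1
  rw [h1, h2, h3]
  set c := chi cs q (cs.simple i)
  rw [show c⁻¹ * (-1) * c = -(c⁻¹ * c) by simp [mul_comm, mul_left_comm]]
  simp

lemma chi_wordProd (ω : List B) (w : W) :
    chi cs (cs.wordProd ω) w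
      = ((cs.rightInvSeq ω).map (fun t => if t = w then (-1 : ℤˣ) else 1)).prod := by
  induction ω generalizing w with
  | nil => simp [chi_one]
  | cons i ω ih =>
    rw [cs.wordProd_cons]
    rw [chi_mul cs (cs.simple i) (cs.wordProd ω) w]
    rw [chi_simple]
    have hris : cs.rightInvSeq (i :: ω)
        = ((cs.wordProd ω)⁻¹ * cs.simple i * cs.wordProd ω) :: cs.rightInvSeq ω := rfl
    rw [hris, List.map_cons, List.prod_cons]
    have hcond : (cs.wordProd ω * w * (cs.wordProd ω)⁻¹ = cs.simple i)
        ↔ ((cs.wordProd ω)⁻¹ * cs.simple i * cs.wordProd ω = w) := by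
      constructor
      · intro h; rw [← h]; group
      · intro h; rw [← h]; group
    rw [ih]
    by_cases h : cs.wordProd ω * w * (cs.wordProd ω)⁻¹ = cs.simple i
    · rw [if_pos h, if_pos (hcond.mp h)]
      exact mul_comm _ _
    · rw [if_neg h, if_neg (fun hh => h (hcond.mpr hh))]
      exact mul_comm _ _

end Chi
section Exchange

variable (cs : CoxeterSystem M W)

lemma chi_eq_one_of_not_mem (ω : List B) (w : W) (h : w ∉ cs.rightInvSeq ω) :
    chi cs (cs.wordProd ω) w = 1 := by
  rw [chi_wordProd]
  apply List.prod_eq_one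
  intro x hx
  rw [List.mem_map] at hx
  obtain ⟨t, ht, rfl⟩ := hx
  rw [if_neg]
  intro hh
  exact h (hh ▸ ht)

lemma right_inversion_of_chi_neg {v t : W} (h : chi cs v t = -1) :
    cs.length (v * t) < cs.length v := by
  obtain ⟨ω, hred, rfl⟩ := cs.exists_reduced_word' v
  have hmem : t ∈ cs.rightInvSeq ω := by
    by_contra hmem
    rw [chi_eq_one_of_not_mem cs ω t hmem] at h
    exact absurd h (by decide)
  exact (cs.isRightInversion_of_mem_rightInvSeq hred hmem).2

lemma chi_neg_of_right_inversion {v t : W} (ht : cs.IsReflection t)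
    (hlen : cs.length (v * t) < cs.length v) : chi cs v t = -1 := by
  rcases Int.units_eq_one_or (chi cs v t) with h | h
  · exfalso
    have h1 : chi cs (v * t) t = -1 := by
      have h2 := chi_mul cs v t t
      have harg : t * t * t⁻¹ = t := by
        rw [ht.mul_self, ht.inv]
        simp
      rw [harg, chi_reflection_self cs ht, h] at h2
      simpa using h2
    have h3 := right_inversion_of_chi_neg cs h1
    rw [mul_assoc, ht.mul_self, mul_one] at h3
    omega
  · exact h

lemma mem_rightInvSeq_of_right_inversion {ω : List B} {t : W} (ht : cs.IsReflection t)
    (hlen : cs.length (cs.wordProd ω * t) < cs.length (cs.wordProd ω)) :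
    t ∈ cs.rightInvSeq ω := by
  by_contra hmem
  have h1 := chi_eq_one_of_not_mem cs ω t hmem
  have h2 := chi_neg_of_right_inversion cs ht hlen
  rw [h1] at h2
  exact absurd h2 (by decide)

/-- Strong exchange property (left version). -/
lemma strong_exchange {ω : List B} {t : W} (ht : cs.IsReflection t)
    (hlen : cs.length (t * cs.wordProd ω) < cs.length (cs.wordProd ω)) :
    ∃ j, j < ω.length ∧ t * cs.wordProd ω = cs.wordProd (ω.eraseIdx j) := by
  have hrev : cs.wordProd ω.reverse = (cs.wordProd ω)⁻¹ := cs.wordProd_reverse ω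
  have hlen' : cs.length (cs.wordProd ω.reverse * t) < cs.length (cs.wordProd ω.reverse) := by
    rw [hrev]
    have e1 : cs.length ((cs.wordProd ω)⁻¹ * t) = cs.length (t * cs.wordProd ω) := by
      have : ((cs.wordProd ω)⁻¹ * t)⁻¹ = t * cs.wordProd ω := by
        rw [mul_inv_rev, ht.inv]
        simp
      rw [← this, cs.length_inv]
    have e2 : cs.length ((cs.wordProd ω)⁻¹) = cs.length (cs.wordProd ω) := cs.length_inv _
    omega
  have hmem : t ∈ cs.rightInvSeq ω.reverse :=
    mem_rightInvSeq_of_right_inversion cs ht hlen'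
  rw [cs.rightInvSeq_reverse, List.mem_reverse] at hmem
  obtain ⟨j, hj, hget⟩ := List.mem_iff_getElem.mp hmem
  have hj' : j < ω.length := by
    have := cs.length_leftInvSeq ω
    omega
  refine ⟨j, hj', ?_⟩
  have := cs.getD_leftInvSeq_mul_wordProd ω j
  rw [List.getD_eq_getElem _ 1 hj, hget] at this
  exact this

end Exchange

section Bruhat

variable (cs : CoxeterSystem M W)

lemma bruhatLe_refl (u : W) : BruhatLe cs u u := Relation.ReflTransGen.refl

lemma bruhatLe_trans {u v w : W} (h1 : BruhatLe cs u v) (h2 : BruhatLe cs v w) :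
    BruhatLe cs u w := Relation.ReflTransGen.trans h1 h2

lemma bruhatCov_le {u v : W} (h : BruhatCov cs u v) : BruhatLe cs u v :=
  Relation.ReflTransGen.single h

lemma length_le_of_bruhatLe {u v : W} (h : BruhatLe cs u v) : cs.length u ≤ cs.length v := by
  induction h with
  | refl => exact le_refl _
  | tail _ hcov ih =>
    have := hcov.1
    omega

lemma eq_one_of_bruhatLe_one {u : W} (h : BruhatLe cs u 1) : u = 1 := by
  have := length_le_of_bruhatLe cs h
  rw [cs.length_one] at this
  rw [← cs.length_eq_zero_iff]
  omega

lemma bruhatLe_inv {u v : W} (h : BruhatLe cs u v) : BruhatLe cs u⁻¹ v⁻¹ := by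
  induction h with
  | refl => exact Relation.ReflTransGen.refl
  | tail _ hcov ih =>
    rename_i b c _
    refine Relation.ReflTransGen.tail ih ?_
    obtain ⟨hlen, t, ht, rfl⟩ := hcov
    constructor
    · rw [cs.length_inv, cs.length_inv]
      exact hlen
    · refine ⟨b⁻¹ * t * b, ?_, ?_⟩
      · obtain ⟨q, i, rfl⟩ := ht
        exact ⟨b⁻¹ * q, i, by group⟩
      · rw [mul_inv_rev, ht.inv]
        group

lemma bruhatCov_simple {u : W} (i : B)
    (h : cs.length (cs.simple i * u) = cs.length u + 1) :
    BruhatCov cs u (cs.simple i * u) :=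
  ⟨h, cs.simple i, cs.isReflection_simple i, rfl⟩

end Bruhat

section Lifting

variable (cs : CoxeterSystem M W)

lemma simple_dich (i : B) (w : W) :
    (cs.length (cs.simple i * w) + 1 = cs.length w) ∨
      cs.length (cs.simple i * w) = cs.length w + 1 := by
  by_cases h : cs.IsLeftDescent w i
  · left; exact cs.isLeftDescent_iff.mp h
  · right; exact cs.not_isLeftDescent_iff.mp h

/-- Key collision lemma: if `w' ⋖ w = t * w'`, `s_i` is a left descent of `w` but a left
ascent of `w'`, then `s_i * w = w'`. -/
lemma collision {t w' : W} (i : B) (ht : cs.IsReflection t)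
    (hcov : cs.length (t * w') = cs.length w' + 1)
    (hw : cs.length (cs.simple i * (t * w')) < cs.length (t * w'))
    (hw' : cs.length w' < cs.length (cs.simple i * w')) :
    cs.simple i * (t * w') = w' := by
  obtain ⟨ρ, hρlen, hρ⟩ := cs.exists_reduced_word (cs.simple i * (t * w'))
  replace hρlen : ρ.length = cs.length (cs.simple i * (t * w')) := by
    rw [hρ]; exact hρlen.eq.symm
  have hπ : cs.wordProd (i :: ρ) = t * w' := by
    rw [cs.wordProd_cons, ← hρ, cs.simple_mul_simple_cancel_left]
  have htw : t * (t * w') = w' := by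
    rw [← mul_assoc, ht.mul_self, one_mul]
  have hlen2 : cs.length (t * cs.wordProd (i :: ρ)) < cs.length (cs.wordProd (i :: ρ)) := by
    rw [hπ, htw]
    omega
  obtain ⟨j, hj, hje⟩ := strong_exchange cs ht hlen2
  rw [hπ, htw] at hje
  match j, hj with
  | 0, _ =>
    rw [List.eraseIdx_cons_zero] at hje
    rw [hρ, ← hje]
  | (k+1), hj =>
    exfalso
    rw [List.eraseIdx_cons_succ, cs.wordProd_cons] at hje
    have hsu : cs.simple i * w' = cs.wordProd (ρ.eraseIdx k) := by
      rw [hje, cs.simple_mul_simple_cancel_left]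
    have hklt : k < ρ.length := by
      simp only [List.length_cons] at hj
      omega
    have hb1 := cs.length_wordProd_le (ρ.eraseIdx k)
    have hb2 : (ρ.eraseIdx k).length + 1 = ρ.length := List.length_eraseIdx_add_one hklt
    rw [← hsu] at hb1
    omega

/-- The Demazure raising operator. -/
noncomputable def phiS (i : B) (a : W) : W :=
  if cs.length a < cs.length (cs.simple i * a) then cs.simple i * a else a

lemma phiS_def (i : B) (a : W) : phiS cs i a =
    if cs.length a < cs.length (cs.simple i * a) then cs.simple i * a else a := rfl

lemma phiS_cov (i : B) {a a' : W} (h : BruhatCov cs a a') :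
    BruhatLe cs (phiS cs i a) (phiS cs i a') := by
  obtain ⟨hlen, t, ht, rfl⟩ := h
  by_cases ha : cs.length a < cs.length (cs.simple i * a) <;>
    by_cases ha' : cs.length (t * a) < cs.length (cs.simple i * (t * a))
  · -- both ascents
    rw [phiS_def, if_pos ha, phiS_def, if_pos ha']
    apply bruhatCov_le
    constructor
    · rcases simple_dich cs i a with h1 | h1
      · omega
      · rcases simple_dich cs i (t * a) with h2 | h2
        · omega
        · omega
    · refine ⟨cs.simple i * t * cs.simple i, ?_, ?_⟩
      · have := ht.conj (cs.simple i)
        rwa [cs.inv_simple] at this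
      · simp [mul_assoc, cs.simple_mul_simple_cancel_left]
  · -- a ascent, t*a descent: collision
    have hD := simple_dich cs i (t * a)
    have hc : cs.simple i * (t * a) = a :=
      collision cs i ht hlen (by omega) ha
    rw [phiS_def, if_pos ha, phiS_def, if_neg ha']
    have h2 : t * a = cs.simple i * a := by
      conv_rhs => rw [← hc]
      rw [cs.simple_mul_simple_cancel_left]
    rw [h2]
    exact bruhatLe_refl cs _
  · -- a descent, t*a ascent
    rw [phiS_def, if_neg ha, phiS_def, if_pos ha']
    have c1 : BruhatCov cs a (t * a) := ⟨hlen, t, ht, rfl⟩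
    rcases simple_dich cs i (t * a) with h2 | h2
    · omega
    · have c2 : BruhatCov cs (t * a) (cs.simple i * (t * a)) := bruhatCov_simple cs i h2
      exact bruhatLe_trans cs (bruhatCov_le cs c1) (bruhatCov_le cs c2)
  · rw [phiS_def, if_neg ha, phiS_def, if_neg ha']
    exact bruhatCov_le cs ⟨hlen, t, ht, rfl⟩

lemma phiS_mono (i : B) {a b : W} (h : BruhatLe cs a b) :
    BruhatLe cs (phiS cs i a) (phiS cs i b) := by
  induction h with
  | refl => exact bruhatLe_refl cs _
  | tail _ hcov ih => exact bruhatLe_trans cs ih (phiS_cov cs i hcov)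

lemma phiS_simple_mul_of_descent (i : B) {u : W}
    (h : cs.length (cs.simple i * u) < cs.length u) :
    phiS cs i (cs.simple i * u) = u := by
  rw [phiS_def, cs.simple_mul_simple_cancel_left, if_pos h]

/-- Chain property: any length-increasing reflection move is a Bruhat relation. -/
lemma le_of_move_aux : ∀ n : ℕ, ∀ t u v : W, cs.IsReflection t → v = t * u →
    cs.length u < cs.length v → cs.length v ≤ n → BruhatLe cs u v := by
  intro n
  induction n with
  | zero =>
    intro t u v ht hv hl hb
    omega
  | succ n ih =>
    intro t u v ht hv hl hb
    by_cases hcov : cs.length v = cs.length u + 1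
    · exact bruhatCov_le cs ⟨hcov, t, ht, hv⟩
    · have hvne : v ≠ 1 := by
        intro h
        rw [h, cs.length_one] at hl
        omega
      obtain ⟨i, hdesc⟩ := cs.exists_leftDescent_of_ne_one hvne
      have hsv : cs.length (cs.simple i * v) + 1 = cs.length v := cs.isLeftDescent_iff.mp hdesc
      have hrefl : cs.IsReflection (cs.simple i * t * cs.simple i) := by
        have := ht.conj (cs.simple i)
        rwa [cs.inv_simple] at this
      have hmove : cs.simple i * v = (cs.simple i * t * cs.simple i) * (cs.simple i * u) := by
        rw [hv]
        simp [mul_assoc, cs.simple_mul_simple_cancel_left]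
      rcases simple_dich cs i u with hdu | hau
      · -- descent at u
        have h1 : BruhatLe cs (cs.simple i * u) (cs.simple i * v) :=
          ih (cs.simple i * t * cs.simple i) (cs.simple i * u) (cs.simple i * v)
            hrefl hmove (by omega) (by omega)
        have h2 := phiS_mono cs i h1
        rw [phiS_simple_mul_of_descent cs i (by omega),
          phiS_simple_mul_of_descent cs i (by omega)] at h2
        exact h2
      · -- ascent at u
        have c1 : BruhatCov cs u (cs.simple i * u) := bruhatCov_simple cs i hau
        have hne : cs.length (cs.simple i * v) ≠ cs.length (cs.simple i * u) := by
          rw [hmove]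
          exact hrefl.length_mul_right_ne _
        have e1 : cs.length (cs.simple i * u) < cs.length (cs.simple i * v) := by omega
        have e2 : cs.length (cs.simple i * v) ≤ n := by omega
        have h1 : BruhatLe cs (cs.simple i * u) (cs.simple i * v) :=
          ih (cs.simple i * t * cs.simple i) (cs.simple i * u) (cs.simple i * v)
            hrefl hmove e1 e2
        have c2 : BruhatCov cs (cs.simple i * v) v := by
          refine ⟨by omega, cs.simple i, cs.isReflection_simple i, ?_⟩
          rw [cs.simple_mul_simple_cancel_left]
        exact bruhatLe_trans cs (bruhatCov_le cs c1)
          (bruhatLe_trans cs h1 (bruhatCov_le cs c2))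

lemma le_of_move (t u v : W) (ht : cs.IsReflection t) (hv : v = t * u)
    (hl : cs.length u < cs.length v) : BruhatLe cs u v :=
  le_of_move_aux cs (cs.length v) t u v ht hv hl (le_refl _)

/-- The lifting property of the Bruhat order. -/
lemma lift_lemma (i : B) {u w : W} (h : BruhatLe cs u w) :
    cs.length (cs.simple i * w) < cs.length w →
    ((cs.length (cs.simple i * u) < cs.length u →
      BruhatLe cs (cs.simple i * u) (cs.simple i * w)) ∧
    (cs.length u < cs.length (cs.simple i * u) → BruhatLe cs u (cs.simple i * w))) := by
  induction h with
  | refl =>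
    intro hw
    constructor
    · intro _
      exact bruhatLe_refl cs _
    · intro hu
      omega
  | tail hb hcov ih =>
    rename_i b c
    intro hw
    obtain ⟨hlen, r, hr, rfl⟩ := hcov
    rcases simple_dich cs i b with hdb | hab
    · -- descent at b
      have ihb := ih (by omega)
      have hrefl : cs.IsReflection (cs.simple i * r * cs.simple i) := by
        have := hr.conj (cs.simple i)
        rwa [cs.inv_simple] at this
      have hmove : cs.simple i * (r * b) =
          (cs.simple i * r * cs.simple i) * (cs.simple i * b) := by
        simp [mul_assoc, cs.simple_mul_simple_cancel_left]
      have hD := simple_dich cs i (r * b)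
      have hbc : BruhatLe cs (cs.simple i * b) (cs.simple i * (r * b)) :=
        le_of_move cs (cs.simple i * r * cs.simple i) (cs.simple i * b)
          (cs.simple i * (r * b)) hrefl hmove (by omega)
      constructor
      · intro hu
        exact bruhatLe_trans cs (ihb.1 hu) hbc
      · intro hu
        exact bruhatLe_trans cs (ihb.2 hu) hbc
    · -- ascent at b : collision
      have hc : cs.simple i * (r * b) = b := collision cs i hr hlen hw (by omega)
      constructor
      · intro hu
        rw [hc]
        have hDu := simple_dich cs i u
        have c1 : BruhatCov cs (cs.simple i * u) u := by
          refine ⟨by omega, cs.simple i, cs.isReflection_simple i, ?_⟩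
          rw [cs.simple_mul_simple_cancel_left]
        exact bruhatLe_trans cs (bruhatCov_le cs c1) hb
      · intro hu
        rw [hc]
        exact hb

end Lifting
section Main

variable (cs : CoxeterSystem M W)

/-- The central result: if `u = v y` and `u' = v y'` are reduced factorizations and
`u ≤ u'` in Bruhat order, then `y' ≤ y`. -/
lemma main_aux : ∀ n : ℕ, ∀ v u u' y y' : W, cs.length v ≤ n →
    u = v * y → u' = v * y' →
    cs.length u + cs.length y = cs.length v →
    cs.length u' + cs.length y' = cs.length v →
    BruhatLe cs u u' → BruhatLe cs y' y := by
  intro n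
  induction n with
  | zero =>
    intro v u u' y y' hn hu hu' hl hl' hle
    have hy : y = 1 := by
      rw [← cs.length_eq_zero_iff]
      omega
    have hy' : y' = 1 := by
      rw [← cs.length_eq_zero_iff]
      omega
    rw [hy, hy']
    exact bruhatLe_refl cs _
  | succ n ih =>
    intro v u u' y y' hn hu hu' hl hl' hle
    by_cases hone : u' = 1
    · have hu1 : u = 1 := eq_one_of_bruhatLe_one cs (hone ▸ hle)
      have hyv : y = v⁻¹ := by
        rw [hu1] at hu
        exact eq_inv_of_mul_eq_one_right hu.symm
      have hyv' : y' = v⁻¹ := by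
        rw [hone] at hu'
        exact eq_inv_of_mul_eq_one_right hu'.symm
      rw [hyv, hyv']
      exact bruhatLe_refl cs _
    · obtain ⟨i, hdesc⟩ := cs.exists_leftDescent_of_ne_one hone
      have hdu' : cs.length (cs.simple i * u') + 1 = cs.length u' :=
        cs.isLeftDescent_iff.mp hdesc
      have hdv : cs.length (cs.simple i * v) + 1 = cs.length v := by
        have hveq : cs.simple i * v = (cs.simple i * u') * y'⁻¹ := by
          rw [hu']
          group
        have hub : cs.length (cs.simple i * v)
            ≤ cs.length (cs.simple i * u') + cs.length y' := by
          rw [hveq]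
          have := cs.length_mul_le (cs.simple i * u') y'⁻¹
          rw [cs.length_inv] at this
          exact this
        rcases simple_dich cs i v with h | h
        · exact h
        · omega
      have hlift := lift_lemma cs i hle (by omega)
      rcases simple_dich cs i u with hdu | hau
      · -- Case A : descent at u
        have h1 : BruhatLe cs (cs.simple i * u) (cs.simple i * u') := hlift.1 (by omega)
        exact ih (cs.simple i * v) (cs.simple i * u) (cs.simple i * u') y y'
          (by omega) (by rw [hu, mul_assoc]) (by rw [hu', mul_assoc])
          (by omega) (by omega) h1
      · -- Case B : ascent at u
        have h2 : BruhatLe cs u (cs.simple i * u') := hlift.2 (by omega)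
        obtain ⟨ρu, hρulen, hρu⟩ := cs.exists_reduced_word u
        obtain ⟨ρy, hρylen, hρy⟩ := cs.exists_reduced_word y⁻¹
        replace hρulen : ρu.length = cs.length u := by
          rw [hρu]; exact hρulen.eq.symm
        replace hρylen : ρy.length = cs.length y⁻¹ := by
          rw [hρy]; exact hρylen.eq.symm
        have hπω : cs.wordProd (ρu ++ ρy) = v := by
          rw [cs.wordProd_append, ← hρu, ← hρy, hu]
          group
        have hlenv : cs.length (cs.simple i * cs.wordProd (ρu ++ ρy))
            < cs.length (cs.wordProd (ρu ++ ρy)) := by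
          rw [hπω]
          omega
        obtain ⟨j, hj, hje⟩ := strong_exchange cs (cs.isReflection_simple i) hlenv
        rw [hπω] at hje
        rcases lt_or_ge j ρu.length with hjlt | hjge
        · exfalso
          rw [eraseIdx_append_lt _ _ _ hjlt, cs.wordProd_append, ← hρy] at hje
          have hsu : cs.simple i * u = cs.wordProd (ρu.eraseIdx j) := by
            have h3 : cs.simple i * u = cs.simple i * v * y := by
              rw [hu, mul_assoc]
            rw [h3, hje]
            simp [mul_assoc]
          have hb1 := cs.length_wordProd_le (ρu.eraseIdx j)
          have hb2 : (ρu.eraseIdx j).length + 1 = ρu.length :=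
            List.length_eraseIdx_add_one hjlt
          rw [← hsu] at hb1
          omega
        · have hklt : j - ρu.length < ρy.length := by
            have hωlen : (ρu ++ ρy).length = ρu.length + ρy.length := List.length_append
            omega
          rw [eraseIdx_append_ge _ _ _ hjge, cs.wordProd_append, ← hρu] at hje
          have hyhinv : (v⁻¹ * cs.simple i * u)⁻¹
              = cs.wordProd (ρy.eraseIdx (j - ρu.length)) := by
            have h4 : (v⁻¹ * cs.simple i * u)⁻¹ = u⁻¹ * (cs.simple i * v) := by
              rw [mul_inv_rev, mul_inv_rev, cs.inv_simple]
              group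
            rw [h4, hje]
            simp [mul_assoc]
          have hyhlen : cs.length (v⁻¹ * cs.simple i * u) + 1 = cs.length y := by
            have b1 : cs.length ((v⁻¹ * cs.simple i * u)⁻¹)
                ≤ (ρy.eraseIdx (j - ρu.length)).length := by
              rw [hyhinv]
              exact cs.length_wordProd_le _
            have b2 : (ρy.eraseIdx (j - ρu.length)).length + 1 = ρy.length :=
              List.length_eraseIdx_add_one hklt
            have b3 : cs.length ((v⁻¹ * cs.simple i * u)⁻¹)
                = cs.length (v⁻¹ * cs.simple i * u) := cs.length_inv _
            have b4 : cs.length (y⁻¹) = cs.length y := cs.length_inv _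
            have b5 : cs.length (cs.simple i * v)
                ≤ cs.length u + cs.length ((v⁻¹ * cs.simple i * u)⁻¹) := by
              have h5 : cs.simple i * v = u * (v⁻¹ * cs.simple i * u)⁻¹ := by
                rw [mul_inv_rev, mul_inv_rev, cs.inv_simple]
                group
              rw [h5]
              exact cs.length_mul_le _ _
            omega
          have h3 : BruhatLe cs y' (v⁻¹ * cs.simple i * u) := by
            refine ih (cs.simple i * v) u (cs.simple i * u') (v⁻¹ * cs.simple i * u) y'
              (by omega) ?_ (by rw [hu', mul_assoc]) (by omega) (by omega) h2
            have h6 : (cs.simple i * v) * (v⁻¹ * cs.simple i * u) = u := by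
              have h7 : (cs.simple i * v) * (v⁻¹ * cs.simple i * u)
                  = cs.simple i * (cs.simple i * u) := by
                group
              rw [h7, cs.simple_mul_simple_cancel_left]
            exact h6.symm
          have hcovyh : BruhatCov cs (v⁻¹ * cs.simple i * u) y := by
            constructor
            · omega
            · refine ⟨(v⁻¹ * cs.simple i * u) * u⁻¹ * cs.simple i
                * ((v⁻¹ * cs.simple i * u) * u⁻¹)⁻¹,
                ⟨(v⁻¹ * cs.simple i * u) * u⁻¹, i, rfl⟩, ?_⟩
              have hy : y = v⁻¹ * u := by
                rw [hu]
                group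
              have h8 : (v⁻¹ * cs.simple i * u) * u⁻¹ * cs.simple i
                  * ((v⁻¹ * cs.simple i * u) * u⁻¹)⁻¹ * (v⁻¹ * cs.simple i * u)
                  = v⁻¹ * cs.simple i * (cs.simple i * u) := by
                group
              rw [hy, h8, mul_assoc, cs.simple_mul_simple_cancel_left]
          exact bruhatLe_trans cs h3 (bruhatCov_le cs hcovyh)

lemma main (v u u' y y' : W) (hu : u = v * y) (hu' : u' = v * y')
    (hl : cs.length u + cs.length y = cs.length v)
    (hl' : cs.length u' + cs.length y' = cs.length v)
    (hle : BruhatLe cs u u') : BruhatLe cs y' y :=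
  main_aux cs (cs.length v) v u u' y y' (le_refl _) hu hu' hl hl' hle

end Main
theorem stmt10 (cs : CoxeterSystem M W) (z : W) :
    Set.BijOn (fun x => z * x⁻¹) {x | leftLe cs x z} {y | rightLe cs y z} ∧
      ∀ x x', leftLe cs x z → leftLe cs x' z →
        (BruhatLe cs x x' ↔ BruhatLe cs (z * x'⁻¹) (z * x⁻¹)) := by
  constructor
  · refine ⟨?_, ?_, ?_⟩
    · intro x hx
      have hx' : cs.length (z * x⁻¹) + cs.length x = cs.length z := hx
      show rightLe cs (z * x⁻¹) z
      unfold rightLe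
      have h1 : (z * x⁻¹)⁻¹ * z = x := by group
      rw [h1]
      exact hx'
    · intro a _ b _ hab
      simp only at hab
      have h1 : a⁻¹ = b⁻¹ := mul_left_cancel hab
      exact inv_injective h1
    · intro y hy
      have hy' : cs.length y + cs.length (y⁻¹ * z) = cs.length z := hy
      refine ⟨y⁻¹ * z, ?_, ?_⟩
      · show leftLe cs (y⁻¹ * z) z
        unfold leftLe
        have h1 : z * (y⁻¹ * z)⁻¹ = y := by group
        rw [h1]
        omega
      · simp only
        group
  · intro x x' hx hx'
    have hxl : cs.length (z * x⁻¹) + cs.length x = cs.length z := hx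
    have hxl' : cs.length (z * x'⁻¹) + cs.length x' = cs.length z := hx'
    have hix := cs.length_inv x
    have hix' := cs.length_inv x'
    have hiz := cs.length_inv z
    constructor
    · intro h
      exact main cs z⁻¹ x⁻¹ x'⁻¹ (z * x⁻¹) (z * x'⁻¹) (by group) (by group)
        (by omega) (by omega) (bruhatLe_inv cs h)
    · intro h
      have h1 : BruhatLe cs x⁻¹ x'⁻¹ :=
        main cs z (z * x'⁻¹) (z * x⁻¹) x'⁻¹ x⁻¹ rfl rfl (by omega) (by omega) h
      have h2 := bruhatLe_inv cs h1
      simpa using h2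
end PaperStmt
end
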